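/- On W(0,0), the maps D₂^{0,0} (defined by D₂^{0,0}(L_m) = (m−1)I_m, D₂^{0,0}(I_m) = 0) and D₃ (defined by D₃(L_m) = m·I_m, D₃(I_m) = 0) are derivations of the Lie algebra W(0,0). -/

import Mathlib

/-- A model of the Lie algebra `W(a,b)`: a complex Lie algebra with a basis
`{L m, I m | m : ℤ}` satisfying the defining bracket relations. -/
structure IsWab (a b : ℂ) (W : Type*) [LieRing W] [LieAlgebra ℂ W]
    (L I : ℤ → W) : Prop where
  bracket_LL : ∀ m n : ℤ, ⁅L m, L n⁆ = ((m - n : ℤ) : ℂ) • L (m + n)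
  bracket_LI : ∀ m n : ℤ, ⁅L m, I n⁆ = (-((n : ℂ) + a + b * (m : ℂ))) • I (m + n)
  bracket_II : ∀ m n : ℤ, ⁅I m, I n⁆ = 0
  basis : ∃ B : Module.Basis (ℤ ⊕ ℤ) ℂ W,
    (∀ m : ℤ, B (Sum.inl m) = L m) ∧ (∀ m : ℤ, B (Sum.inr m) = I m)

/-- `D₂^{0,0}` and `D₃` are derivations of `W(0,0)`. -/
theorem derivations_W00 {W : Type*} [LieRing W] [LieAlgebra ℂ W]
    (L I : ℤ → W) (hW : IsWab 0 0 W L I) (D2 D3 : W →ₗ[ℂ] W)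
    (hD2L : ∀ m : ℤ, D2 (L m) = ((m - 1 : ℤ) : ℂ) • I m)
    (hD2I : ∀ m : ℤ, D2 (I m) = 0)
    (hD3L : ∀ m : ℤ, D3 (L m) = (m : ℂ) • I m)
    (hD3I : ∀ m : ℤ, D3 (I m) = 0) :
    (∀ x y : W, D2 ⁅x, y⁆ = ⁅D2 x, y⁆ + ⁅x, D2 y⁆) ∧
    (∀ x y : W, D3 ⁅x, y⁆ = ⁅D3 x, y⁆ + ⁅x, D3 y⁆) := by
  obtain ⟨B, hBL, hBI⟩ := hW.basis
  have hIL : ∀ m n : ℤ, ⁅I m, L n⁆ = (m : ℂ) • I (m + n) := by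
    intro m n
    rw [← lie_skew, hW.bracket_LI]
    simp [add_comm n m]
  have key : ∀ (D : W →ₗ[ℂ] W) (c : ℤ → ℂ),
      (∀ m, D (L m) = c m • I m) → (∀ m, D (I m) = 0) →
      (∀ m n : ℤ, ((m - n : ℤ) : ℂ) * c (m + n) = c m * m - c n * n) →
      ∀ x y : W, D ⁅x, y⁆ = ⁅D x, y⁆ + ⁅x, D y⁆ := by
    intro D c hL hI hc x y
    let F : W →ₗ[ℂ] W →ₗ[ℂ] W := LinearMap.mk₂ ℂ
      (fun x y => D ⁅x, y⁆ - ⁅D x, y⁆ - ⁅x, D y⁆)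
      (by intro a b z; simp [add_lie]; abel)
      (by intro r a z; simp [smul_lie, smul_sub])
      (by intro a b z; simp [lie_add]; abel)
      (by intro r a z; simp [lie_smul, smul_sub])
    have hF : F = 0 := by
      apply B.ext; intro i
      apply B.ext; intro j
      have hFapp : ∀ u v : W, F u v = D ⁅u, v⁆ - ⁅D u, v⁆ - ⁅u, D v⁆ := fun _ _ => rfl
      rcases i with m | m <;> rcases j with n | n <;>
        simp only [hBL, hBI, hFapp, LinearMap.zero_apply]
      · rw [hW.bracket_LL, map_smul, hL, hL, hL, smul_lie, lie_smul, hIL,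
          hW.bracket_LI]
        have h := hc m n
        push_cast at h
        match_scalars
        linear_combination h
      · rw [hW.bracket_LI, map_smul, hI, hL, hI, lie_zero, smul_lie,
          hW.bracket_II]
        simp
      · rw [hIL, map_smul, hI, hI, hL, zero_lie, lie_smul, hW.bracket_II]
        simp
      · rw [hW.bracket_II, hI, hI, map_zero, zero_lie, lie_zero]
        simp
    have h0 : F x y = 0 := by rw [hF]; rfl
    have h1 : D ⁅x, y⁆ - ⁅D x, y⁆ - ⁅x, D y⁆ = 0 := h0
    rw [sub_sub, sub_eq_zero] at h1
    exact h1
  constructor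
  · exact key D2 (fun m => ((m - 1 : ℤ) : ℂ)) hD2L hD2I (by intro m n; push_cast; ring)
  · exact key D3 (fun m => (m : ℂ)) hD3L hD3I (by intro m n; push_cast; ring)
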